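/- Let k ≥ 4 and let G be a W_k-semi-saturated graph on at least k + 1 vertices. If x and y are distinct vertices of G both of degree 2, then x and y have exactly one common neighbour, i.e. |N(x) ∩ N(y)| = 1. -/

import Mathlib

open SimpleGraph

/-- `G` contains a copy of `F`, i.e. a subgraph isomorphic to `F`. -/
def HasCopy {V W : Type*} (F : SimpleGraph V) (G : SimpleGraph W) : Prop :=
  ∃ f : F →g G, Function.Injective f

/-- `G` is `F`-free: `G` contains no subgraph isomorphic to `F`. -/
def IsFree {V W : Type*} (F : SimpleGraph V) (G : SimpleGraph W) : Prop :=
  ¬ HasCopy F G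

/-- `G` is `F`-semi-saturated: for every pair of non-adjacent vertices `u ≠ v`,
the graph `G + uv` contains a copy of `F` using the edge `uv`. -/
def IsSemiSat {V W : Type*} (F : SimpleGraph V) (G : SimpleGraph W) : Prop :=
  ∀ u v : W, u ≠ v → ¬ G.Adj u v →
    ∃ f : F →g (G ⊔ fromEdgeSet {s(u, v)}), Function.Injective f ∧
      ∃ a b : V, F.Adj a b ∧ f a = u ∧ f b = v

/-- `G` is `F`-saturated: `F`-free and `F`-semi-saturated. -/
def IsSat {V W : Type*} (F : SimpleGraph V) (G : SimpleGraph W) : Prop :=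
  IsFree F G ∧ IsSemiSat F G

/-- The join `G ∨ H` of two graphs. -/
def graphJoin {V W : Type*} (G : SimpleGraph V) (H : SimpleGraph W) :
    SimpleGraph (V ⊕ W) where
  Adj x y :=
    match x, y with
    | Sum.inl a, Sum.inl b => G.Adj a b
    | Sum.inr a, Sum.inr b => H.Adj a b
    | Sum.inl _, Sum.inr _ => True
    | Sum.inr _, Sum.inl _ => True
  symm := ⟨by rintro (a | a) (b | b) h <;> first | exact G.adj_symm h | exact H.adj_symm h | trivial⟩
  loopless := ⟨by rintro (a | a) h <;> first | exact G.irrefl (v := a) h | exact H.irrefl (v := a) h⟩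

/-- The wheel `W_k = K_1 ∨ C_k`. -/
def wheel (k : ℕ) : SimpleGraph (Unit ⊕ Fin k) :=
  graphJoin (⊥ : SimpleGraph Unit) (cycleGraph k)

/-- `sat(n, F)`: the minimum number of edges in an `F`-saturated graph on `n` vertices. -/
noncomputable def satNumber {V : Type*} (F : SimpleGraph V) (n : ℕ) : ℕ :=
  sInf { m | ∃ G : SimpleGraph (Fin n), IsSat F G ∧ G.edgeSet.ncard = m }

/-- `ssat(n, F)`: the minimum number of edges in an `F`-semi-saturated graph on `n` vertices. -/
noncomputable def ssatNumber {V : Type*} (F : SimpleGraph V) (n : ℕ) : ℕ :=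
  sInf { m | ∃ G : SimpleGraph (Fin n), IsSemiSat F G ∧ G.edgeSet.ncard = m }

open Fin.NatCast Fin.CommRing

section Helpers

open SimpleGraph

lemma fin_ne_zero' (m c : ℕ) (h1 : 0 < c) (h2 : c < m + 4) : (c : Fin (m+4)) ≠ 0 := by
  intro h
  have := congrArg Fin.val h
  rw [Fin.val_natCast, Nat.mod_eq_of_lt h2] at this
  simp at this; omega

lemma nbr_sup_left {n : ℕ} (G : SimpleGraph (Fin n)) (u v : Fin n) (huv : u ≠ v) :
    (G ⊔ fromEdgeSet {s(u,v)}).neighborSet u = G.neighborSet u ∪ {v} := by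
  ext z
  simp only [mem_neighborSet, sup_adj, fromEdgeSet_adj, Set.mem_singleton_iff, Sym2.eq,
    Sym2.rel_iff', Prod.mk.injEq, Prod.swap_prod_mk, Set.mem_union]
  constructor
  · rintro (h | ⟨(⟨_,rfl⟩|⟨rfl,rfl⟩), hne⟩) <;> tauto
  · rintro (h | rfl)
    · tauto
    · exact Or.inr ⟨Or.inl ⟨trivial, rfl⟩, huv⟩

lemma nbr_sup_other {n : ℕ} (G : SimpleGraph (Fin n)) (u v z : Fin n)
    (h1 : z ≠ u) (h2 : z ≠ v) :
    (G ⊔ fromEdgeSet {s(u,v)}).neighborSet z = G.neighborSet z := by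
  ext w
  simp only [mem_neighborSet, sup_adj, fromEdgeSet_adj, Set.mem_singleton_iff, Sym2.eq,
    Sym2.rel_iff', Prod.mk.injEq, Prod.swap_prod_mk]
  constructor
  · rintro (h | ⟨(⟨rfl,rfl⟩|⟨rfl,rfl⟩), hne⟩) <;> tauto
  · tauto

lemma adj_of_sup_adj {n : ℕ} (G : SimpleGraph (Fin n)) (u v p q : Fin n)
    (hp : p ≠ u) (hq : q ≠ u) (h : (G ⊔ fromEdgeSet {s(u,v)}).Adj p q) : G.Adj p q := by
  rcases h with h | h
  · exact h
  · simp only [fromEdgeSet_adj, Set.mem_singleton_iff, Sym2.eq, Sym2.rel_iff',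
      Prod.mk.injEq, Prod.swap_prod_mk] at h
    rcases h.1 with ⟨h1, h2⟩ | ⟨h1, h2⟩
    · exact absurd h1 hp
    · exact absurd h2 hq

lemma three_le_ncard {α : Type*} [Fintype α] {s : Set α} {p q r : α}
    (hpq : p ≠ q) (hpr : p ≠ r) (hqr : q ≠ r)
    (hp : p ∈ s) (hq : q ∈ s) (hr : r ∈ s) : 3 ≤ s.ncard := by
  have hsub : ({p, q, r} : Set α) ⊆ s := by
    intro z hz; rcases hz with rfl | rfl | rfl <;> assumption
  have h3 : ({p, q, r} : Set α).ncard = 3 := by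
    rw [Set.ncard_insert_of_notMem (by simp [hpq, hpr]), Set.ncard_pair hqr]
  calc 3 = ({p, q, r} : Set α).ncard := h3.symm
    _ ≤ s.ncard := Set.ncard_le_ncard hsub s.toFinite

lemma four_le_ncard {α : Type*} [Fintype α] {s : Set α} {p q r t : α}
    (hpq : p ≠ q) (hpr : p ≠ r) (hpt : p ≠ t) (hqr : q ≠ r) (hqt : q ≠ t) (hrt : r ≠ t)
    (hp : p ∈ s) (hq : q ∈ s) (hr : r ∈ s) (ht : t ∈ s) : 4 ≤ s.ncard := by
  have hsub : ({p, q, r, t} : Set α) ⊆ s := by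
    intro z hz; rcases hz with rfl | rfl | rfl | rfl <;> assumption
  have h4 : ({p, q, r, t} : Set α).ncard = 4 := by
    rw [Set.ncard_insert_of_notMem (by simp [hpq, hpr, hpt]),
      Set.ncard_insert_of_notMem (by simp [hqr, hqt]), Set.ncard_pair hrt]
  calc 4 = ({p, q, r, t} : Set α).ncard := h4.symm
    _ ≤ s.ncard := Set.ncard_le_ncard hsub s.toFinite

lemma pair_eq_of_ncard {α : Type*} [Fintype α] {s : Set α} {p q : α}
    (hpq : p ≠ q) (hp : p ∈ s) (hq : q ∈ s) (hs : s.ncard = 2) : s = {p, q} := by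
  refine (Set.eq_of_subset_of_ncard_le ?_ ?_ s.toFinite).symm
  · intro z hz; rcases hz with rfl | rfl <;> assumption
  · rw [hs, Set.ncard_pair hpq]

lemma wheel_adj_hub (k : ℕ) (u : Unit) (i : Fin k) : (wheel k).Adj (Sum.inl u) (Sum.inr i) := trivial

lemma wheel_adj_rr (k : ℕ) (i j : Fin k) :
    (wheel k).Adj (Sum.inr i) (Sum.inr j) ↔ (cycleGraph k).Adj i j := Iff.rfl

lemma wheel_adj_succ (m : ℕ) (i : Fin (m+4)) :
    (wheel (m+4)).Adj (Sum.inr i) (Sum.inr (i+1)) := by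
  rw [wheel_adj_rr]
  show (cycleGraph (m+2+2)).Adj i (i+1)
  rw [cycleGraph_adj]
  right; ring

lemma wheel_adj_pred (m : ℕ) (i : Fin (m+4)) :
    (wheel (m+4)).Adj (Sum.inr i) (Sum.inr (i-1)) := by
  rw [wheel_adj_rr]
  show (cycleGraph (m+2+2)).Adj i (i-1)
  rw [cycleGraph_adj]
  left; ring

lemma wheel_adj_cases (m : ℕ) (i j : Fin (m+4))
    (h : (wheel (m+4)).Adj (Sum.inr i) (Sum.inr j)) : j = i + 1 ∨ j = i - 1 := by
  rw [wheel_adj_rr] at h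
  have h' : (cycleGraph (m+2+2)).Adj i j := h
  rw [cycleGraph_adj] at h'
  rcases h' with h' | h'
  · right; rw [sub_eq_iff_eq_add] at h'; linear_combination -h'
  · left; rw [sub_eq_iff_eq_add] at h'; linear_combination h'

lemma three_le_ncard_nbr {m n : ℕ} {H : SimpleGraph (Fin n)}
    (f : wheel (m+4) →g H) (hf : Function.Injective f) (a : Unit ⊕ Fin (m+4)) :
    3 ≤ (H.neighborSet (f a)).ncard := by
  have hne : ∀ p q : Unit ⊕ Fin (m+4), p ≠ q → f p ≠ f q := fun p q h hc => h (hf hc)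
  cases a with
  | inl u =>
    refine three_le_ncard (p := f (Sum.inr 0)) (q := f (Sum.inr 1)) (r := f (Sum.inr 2))
      ?_ ?_ ?_ ?_ ?_ ?_
    · exact hne _ _ (by
        intro h; injection h with h
        exact fin_ne_zero' m 1 (by omega) (by omega) (by push_cast; linear_combination -h))
    · exact hne _ _ (by
        intro h; injection h with h
        exact fin_ne_zero' m 2 (by omega) (by omega) (by push_cast; linear_combination -h))
    · exact hne _ _ (by
        intro h; injection h with h
        exact fin_ne_zero' m 1 (by omega) (by omega) (by push_cast; linear_combination -h))
    · exact f.map_adj (wheel_adj_hub _ _ _)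
    · exact f.map_adj (wheel_adj_hub _ _ _)
    · exact f.map_adj (wheel_adj_hub _ _ _)
  | inr i =>
    refine three_le_ncard (p := f (Sum.inl ())) (q := f (Sum.inr (i+1))) (r := f (Sum.inr (i-1)))
      ?_ ?_ ?_ ?_ ?_ ?_
    · exact hne _ _ (by simp)
    · exact hne _ _ (by simp)
    · exact hne _ _ (by
        intro h; injection h with h
        exact fin_ne_zero' m 2 (by omega) (by omega) (by push_cast; linear_combination h))
    · exact f.map_adj ((wheel (m+4)).adj_symm (wheel_adj_hub _ _ _))
    · exact f.map_adj (wheel_adj_succ m i)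
    · exact f.map_adj (wheel_adj_pred m i)

/-- The core structure lemma: if `f a` has at most `3` neighbours then `a` is a rim
vertex `inr i` and the neighbourhood of `f a` is exactly the image of the wheel
neighbourhood of `a`. -/
lemma rim_structure {m n : ℕ} {H : SimpleGraph (Fin n)}
    (f : wheel (m+4) →g H) (hf : Function.Injective f) (a : Unit ⊕ Fin (m+4))
    (hcard : (H.neighborSet (f a)).ncard ≤ 3) :
    ∃ i : Fin (m+4), a = Sum.inr i ∧
      H.neighborSet (f a) = {f (Sum.inl ()), f (Sum.inr (i+1)), f (Sum.inr (i-1))} := by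
  have hne : ∀ p q : Unit ⊕ Fin (m+4), p ≠ q → f p ≠ f q := fun p q h hc => h (hf hc)
  cases a with
  | inl u =>
    exfalso
    have h4 : 4 ≤ (H.neighborSet (f (Sum.inl u))).ncard := by
      refine four_le_ncard (p := f (Sum.inr 0)) (q := f (Sum.inr 1)) (r := f (Sum.inr 2))
        (t := f (Sum.inr 3)) ?_ ?_ ?_ ?_ ?_ ?_ ?_ ?_ ?_ ?_
      · exact hne _ _ (by
          intro h; injection h with h
          exact fin_ne_zero' m 1 (by omega) (by omega) (by push_cast; linear_combination -h))
      · exact hne _ _ (by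
          intro h; injection h with h
          exact fin_ne_zero' m 2 (by omega) (by omega) (by push_cast; linear_combination -h))
      · exact hne _ _ (by
          intro h; injection h with h
          exact fin_ne_zero' m 3 (by omega) (by omega) (by push_cast; linear_combination -h))
      · exact hne _ _ (by
          intro h; injection h with h
          exact fin_ne_zero' m 1 (by omega) (by omega) (by push_cast; linear_combination -h))
      · exact hne _ _ (by
          intro h; injection h with h
          exact fin_ne_zero' m 2 (by omega) (by omega) (by push_cast; linear_combination -h))
      · exact hne _ _ (by
          intro h; injection h with h
          exact fin_ne_zero' m 1 (by omega) (by omega) (by push_cast; linear_combination -h))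
      · exact f.map_adj (wheel_adj_hub _ _ _)
      · exact f.map_adj (wheel_adj_hub _ _ _)
      · exact f.map_adj (wheel_adj_hub _ _ _)
      · exact f.map_adj (wheel_adj_hub _ _ _)
    omega
  | inr i =>
    refine ⟨i, rfl, ?_⟩
    have hsub : ({f (Sum.inl ()), f (Sum.inr (i+1)), f (Sum.inr (i-1))} : Set (Fin n))
        ⊆ H.neighborSet (f (Sum.inr i)) := by
      intro z hz
      rcases hz with rfl | rfl | rfl
      · exact f.map_adj ((wheel (m+4)).adj_symm (wheel_adj_hub _ _ _))
      · exact f.map_adj (wheel_adj_succ m i)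
      · exact f.map_adj (wheel_adj_pred m i)
    have h3 : ({f (Sum.inl ()), f (Sum.inr (i+1)), f (Sum.inr (i-1))} : Set (Fin n)).ncard = 3 := by
      rw [Set.ncard_insert_of_notMem, Set.ncard_pair]
      · exact hne _ _ (by
          intro h; injection h with h
          exact fin_ne_zero' m 2 (by omega) (by omega) (by push_cast; linear_combination h))
      · simp only [Set.mem_insert_iff, Set.mem_singleton_iff, not_or]
        exact ⟨hne _ _ (by simp), hne _ _ (by simp)⟩
    exact (Set.eq_of_subset_of_ncard_le hsub (by omega) (Set.toFinite _)).symm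

/-- Final step in the adjacent case. -/
lemma final_adjacent {n : ℕ} (G : SimpleGraph (Fin n)) (x y c : Fin n)
    (hxy : x ≠ y) (hy2 : (G.neighborSet y).ncard = 2)
    (hNx : G.neighborSet x = {y, c}) (hyc : G.Adj y c) :
    (G.neighborSet x ∩ G.neighborSet y).ncard = 1 := by
  have hcy : c ≠ y := hyc.ne'
  have hcx : c ≠ x := by
    have : c ∈ G.neighborSet x := by rw [hNx]; right; rfl
    exact (G.ne_of_adj this).symm
  have hxNy : x ∈ G.neighborSet y := by
    have : y ∈ G.neighborSet x := by rw [hNx]; left; rfl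
    exact G.adj_symm this
  have hcNy : c ∈ G.neighborSet y := hyc
  have hNy : G.neighborSet y = {x, c} := pair_eq_of_ncard (Ne.symm hcx) hxNy hcNy hy2
  have : G.neighborSet x ∩ G.neighborSet y = {c} := by
    rw [hNx, hNy]
    ext z
    simp only [Set.mem_inter_iff, Set.mem_insert_iff, Set.mem_singleton_iff]
    constructor
    · rintro ⟨rfl | rfl, h2⟩
      · rcases h2 with rfl | rfl
        · exact absurd rfl hxy
        · rfl
      · rfl
    · rintro rfl; exact ⟨Or.inr rfl, Or.inr rfl⟩
  rw [this, Set.ncard_singleton]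

end Helpers

lemma mem_of_union_singleton {α : Type*} {A T : Set α} {e t : α}
    (hset : A ∪ {e} = T) (ht : t ∈ T) (hne : t ≠ e) : t ∈ A := by
  rw [← hset] at ht
  rcases ht with h | h
  · exact h
  · exact absurd h hne

lemma inter_pair_eq {α : Type*} {h p q : α} (hpq : p ≠ q) :
    ({h, p} ∩ {h, q} : Set α) = {h} := by
  ext z
  simp only [Set.mem_inter_iff, Set.mem_insert_iff, Set.mem_singleton_iff]
  constructor
  · rintro ⟨h1, h2⟩
    rcases h1 with rfl | rfl
    · rfl
    · rcases h2 with h2 | h2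
      · exact h2
      · exact absurd h2 hpq
  · rintro rfl; exact ⟨Or.inl rfl, Or.inl rfl⟩

/-- If `G` is `W_k`-semi-saturated on `n ≥ k + 1` vertices with `k ≥ 4`, then two
distinct vertices of degree `2` have exactly one common neighbour. -/
theorem roots_common_neighbour (k n : ℕ) (hk : 4 ≤ k) (hn : k + 1 ≤ n)
    (G : SimpleGraph (Fin n)) (hG : IsSemiSat (wheel k) G)
    (x y : Fin n) (hxy : x ≠ y)
    (hx : (G.neighborSet x).ncard = 2) (hy : (G.neighborSet y).ncard = 2) :
    (G.neighborSet x ∩ G.neighborSet y).ncard = 1 := by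
  obtain ⟨m, rfl⟩ : ∃ m, k = m + 4 := ⟨k - 4, by omega⟩
  by_cases hadj : G.Adj x y
  · -- Case 1: x and y adjacent.
    -- First find a non-neighbour w of x.
    obtain ⟨w, hwx, hwnadj⟩ : ∃ w : Fin n, w ≠ x ∧ ¬ G.Adj x w := by
      by_contra hc
      push_neg at hc
      have hsub : Set.univ \ {x} ⊆ G.neighborSet x := fun z hz => hc z hz.2
      have h1 : (Set.univ \ {x} : Set (Fin n)).ncard = n - 1 := by
        rw [Set.ncard_diff_singleton_of_mem (Set.mem_univ x), Set.ncard_univ,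
          Nat.card_eq_fintype_card, Fintype.card_fin]
      have h2 := Set.ncard_le_ncard hsub (Set.toFinite _)
      rw [h1, hx] at h2
      omega
    obtain ⟨f, hf, a, b, hab, hfa, hfb⟩ := hG x w (Ne.symm hwx) hwnadj
    have hne : ∀ p q : Unit ⊕ Fin (m+4), p ≠ q → f p ≠ f q := fun p q h hc => h (hf hc)
    have hNx' : (G ⊔ fromEdgeSet {s(x,w)}).neighborSet x = G.neighborSet x ∪ {w} :=
      nbr_sup_left G x w (Ne.symm hwx)
    have hcard : ((G ⊔ fromEdgeSet {s(x,w)}).neighborSet x).ncard ≤ 3 := by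
      rw [hNx']
      calc (G.neighborSet x ∪ {w}).ncard ≤ (G.neighborSet x).ncard + ({w} : Set (Fin n)).ncard :=
            Set.ncard_union_le _ _
        _ ≤ 3 := by rw [hx, Set.ncard_singleton]
    obtain ⟨i, rfl, htriple⟩ := rim_structure f hf a (by rw [hfa]; exact hcard)
    rw [hfa] at htriple
    have hunion : G.neighborSet x ∪ {w} =
        ({f (Sum.inl ()), f (Sum.inr (i+1)), f (Sum.inr (i-1))} : Set (Fin n)) := by
      rw [← hNx', htriple]
    cases b with
    | inl u =>
      -- w is the hub; then y is a rim vertex of degree ≥ 3 in G + xw, contradiction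
      exfalso
      have hwinl : w = f (Sum.inl u) := hfb.symm
      have hp : f (Sum.inr (i+1)) ∈ G.neighborSet x := by
        refine mem_of_union_singleton hunion (by right; left; rfl) ?_
        exact fun hEq => hne _ _ (by simp) (hEq.trans hwinl)
      have hq : f (Sum.inr (i-1)) ∈ G.neighborSet x := by
        refine mem_of_union_singleton hunion (by right; right; rfl) ?_
        exact fun hEq => hne _ _ (by simp) (hEq.trans hwinl)
      have hNxpair : G.neighborSet x = {f (Sum.inr (i+1)), f (Sum.inr (i-1))} := by
        refine pair_eq_of_ncard ?_ hp hq hx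
        exact hne _ _ (by
          intro h; injection h with h
          exact fin_ne_zero' m 2 (by omega) (by omega) (by push_cast; linear_combination h))
      have hyy : y ∈ G.neighborSet x := (G.mem_neighborSet x y).mpr hadj
      rw [hNxpair] at hyy
      have hynew : y ≠ w := fun h => hwnadj (h ▸ hadj)
      have hyH : (G ⊔ fromEdgeSet {s(x,w)}).neighborSet y = G.neighborSet y :=
        nbr_sup_other G x w y (Ne.symm hxy) hynew
      simp only [Set.mem_insert_iff, Set.mem_singleton_iff] at hyy
      rcases hyy with h1 | h1
      · have h3 := three_le_ncard_nbr f hf (Sum.inr (i+1))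
        rw [← h1, hyH, hy] at h3
        omega
      · have h3 := three_le_ncard_nbr f hf (Sum.inr (i-1))
        rw [← h1, hyH, hy] at h3
        omega
    | inr j =>
      have hcyc : (wheel (m+4)).Adj (Sum.inr i) (Sum.inr j) := hab
      have hxnei : x = f (Sum.inr i) := hfa.symm
      rcases wheel_adj_cases m i j hcyc with hj | hj
      · -- w = f (inr (i+1))
        subst hj
        have hwq : w = f (Sum.inr (i+1)) := hfb.symm
        have hhx : f (Sum.inl ()) ∈ G.neighborSet x := by
          refine mem_of_union_singleton hunion (by left; rfl) ?_
          exact fun hEq => hne _ _ (by simp) (hEq.trans hwq)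
        have hpx : f (Sum.inr (i-1)) ∈ G.neighborSet x := by
          refine mem_of_union_singleton hunion (by right; right; rfl) ?_
          exact fun hEq => hne _ _ (by
            intro h; injection h with h
            exact fin_ne_zero' m 2 (by omega) (by omega) (by push_cast; linear_combination -h)) (hEq.trans hwq)
        have hNxpair : G.neighborSet x = {f (Sum.inl ()), f (Sum.inr (i-1))} :=
          pair_eq_of_ncard (hne _ _ (by simp)) hhx hpx hx
        have hadjpq : G.Adj (f (Sum.inl ())) (f (Sum.inr (i-1))) := by
          refine adj_of_sup_adj G x w _ _ ?_ ?_ (f.map_adj (wheel_adj_hub _ _ _))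
          · exact fun hEq => hne _ _ (by simp) (hEq.trans hxnei)
          · exact fun hEq => hne _ _ (by
              intro h; injection h with h
              exact fin_ne_zero' m 1 (by omega) (by omega) (by push_cast; linear_combination -h)) (hEq.trans hxnei)
        have hyy : y ∈ G.neighborSet x := (G.mem_neighborSet x y).mpr hadj
        rw [hNxpair] at hyy
        simp only [Set.mem_insert_iff, Set.mem_singleton_iff] at hyy
        rcases hyy with h1 | h1
        · exact final_adjacent G x y (f (Sum.inr (i-1))) hxy hy (by rw [hNxpair, h1])
            (h1 ▸ hadjpq)
        · refine final_adjacent G x y (f (Sum.inl ())) hxy hy ?_ (h1 ▸ hadjpq.symm)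
          rw [hNxpair, h1, Set.pair_comm]
      · -- w = f (inr (i-1))
        subst hj
        have hwq : w = f (Sum.inr (i-1)) := hfb.symm
        have hhx : f (Sum.inl ()) ∈ G.neighborSet x := by
          refine mem_of_union_singleton hunion (by left; rfl) ?_
          exact fun hEq => hne _ _ (by simp) (hEq.trans hwq)
        have hpx : f (Sum.inr (i+1)) ∈ G.neighborSet x := by
          refine mem_of_union_singleton hunion (by right; left; rfl) ?_
          exact fun hEq => hne _ _ (by
            intro h; injection h with h
            exact fin_ne_zero' m 2 (by omega) (by omega) (by push_cast; linear_combination h)) (hEq.trans hwq)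
        have hNxpair : G.neighborSet x = {f (Sum.inl ()), f (Sum.inr (i+1))} :=
          pair_eq_of_ncard (hne _ _ (by simp)) hhx hpx hx
        have hadjpq : G.Adj (f (Sum.inl ())) (f (Sum.inr (i+1))) := by
          refine adj_of_sup_adj G x w _ _ ?_ ?_ (f.map_adj (wheel_adj_hub _ _ _))
          · exact fun hEq => hne _ _ (by simp) (hEq.trans hxnei)
          · exact fun hEq => hne _ _ (by
              intro h; injection h with h
              exact fin_ne_zero' m 1 (by omega) (by omega) (by push_cast; linear_combination h)) (hEq.trans hxnei)
        have hyy : y ∈ G.neighborSet x := (G.mem_neighborSet x y).mpr hadj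
        rw [hNxpair] at hyy
        simp only [Set.mem_insert_iff, Set.mem_singleton_iff] at hyy
        rcases hyy with h1 | h1
        · exact final_adjacent G x y (f (Sum.inr (i+1))) hxy hy (by rw [hNxpair, h1])
            (h1 ▸ hadjpq)
        · refine final_adjacent G x y (f (Sum.inl ())) hxy hy ?_ (h1 ▸ hadjpq.symm)
          rw [hNxpair, h1, Set.pair_comm]
  · -- Case 2: x and y non-adjacent; add the edge xy.
    obtain ⟨f, hf, a, b, hab, hfa, hfb⟩ := hG x y hxy hadj
    have hne : ∀ p q : Unit ⊕ Fin (m+4), p ≠ q → f p ≠ f q := fun p q h hc => h (hf hc)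
    have hNx' : (G ⊔ fromEdgeSet {s(x,y)}).neighborSet x = G.neighborSet x ∪ {y} :=
      nbr_sup_left G x y hxy
    have hNy' : (G ⊔ fromEdgeSet {s(x,y)}).neighborSet y = G.neighborSet y ∪ {x} := by
      have := nbr_sup_left G y x (Ne.symm hxy)
      rwa [Sym2.eq_swap] at this
    have hcardx : ((G ⊔ fromEdgeSet {s(x,y)}).neighborSet x).ncard ≤ 3 := by
      rw [hNx']
      calc (G.neighborSet x ∪ {y}).ncard ≤ (G.neighborSet x).ncard + ({y} : Set (Fin n)).ncard :=
            Set.ncard_union_le _ _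
        _ ≤ 3 := by rw [hx, Set.ncard_singleton]
    have hcardy : ((G ⊔ fromEdgeSet {s(x,y)}).neighborSet y).ncard ≤ 3 := by
      rw [hNy']
      calc (G.neighborSet y ∪ {x}).ncard ≤ (G.neighborSet y).ncard + ({x} : Set (Fin n)).ncard :=
            Set.ncard_union_le _ _
        _ ≤ 3 := by rw [hy, Set.ncard_singleton]
    obtain ⟨i, rfl, htx⟩ := rim_structure f hf a (by rw [hfa]; exact hcardx)
    obtain ⟨j, rfl, hty⟩ := rim_structure f hf b (by rw [hfb]; exact hcardy)
    rw [hfa] at htx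
    rw [hfb] at hty
    have hunionx : G.neighborSet x ∪ {y} =
        ({f (Sum.inl ()), f (Sum.inr (i+1)), f (Sum.inr (i-1))} : Set (Fin n)) := by
      rw [← hNx', htx]
    have hunjy : G.neighborSet y ∪ {x} =
        ({f (Sum.inl ()), f (Sum.inr (j+1)), f (Sum.inr (j-1))} : Set (Fin n)) := by
      rw [← hNy', hty]
    have hxnei : x = f (Sum.inr i) := hfa.symm
    have hynei : y = f (Sum.inr j) := hfb.symm
    have hcyc : (wheel (m+4)).Adj (Sum.inr i) (Sum.inr j) := hab
    rcases wheel_adj_cases m i j hcyc with hj | hj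
    · -- j = i + 1
      subst hj
      have hhx : f (Sum.inl ()) ∈ G.neighborSet x := by
        refine mem_of_union_singleton hunionx (by left; rfl) ?_
        exact fun hEq => hne _ _ (by simp) (hEq.trans hynei)
      have hpx : f (Sum.inr (i-1)) ∈ G.neighborSet x := by
        refine mem_of_union_singleton hunionx (by right; right; rfl) ?_
        exact fun hEq => hne _ _ (by
          intro h; injection h with h
          exact fin_ne_zero' m 2 (by omega) (by omega) (by push_cast; linear_combination -h)) (hEq.trans hynei)
      have hNxpair : G.neighborSet x = {f (Sum.inl ()), f (Sum.inr (i-1))} :=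
        pair_eq_of_ncard (hne _ _ (by simp)) hhx hpx hx
      have hhy : f (Sum.inl ()) ∈ G.neighborSet y := by
        refine mem_of_union_singleton hunjy (by left; rfl) ?_
        exact fun hEq => hne _ _ (by simp) (hEq.trans hxnei)
      have hqy : f (Sum.inr (i+1+1)) ∈ G.neighborSet y := by
        refine mem_of_union_singleton hunjy (by right; left; rfl) ?_
        exact fun hEq => hne _ _ (by
          intro h; injection h with h
          exact fin_ne_zero' m 2 (by omega) (by omega) (by push_cast; linear_combination h)) (hEq.trans hxnei)
      have hNypair : G.neighborSet y = {f (Sum.inl ()), f (Sum.inr (i+1+1))} :=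
        pair_eq_of_ncard (hne _ _ (by simp)) hhy hqy hy
      have hpq : f (Sum.inr (i-1)) ≠ f (Sum.inr (i+1+1)) := by
        exact hne _ _ (by
          intro h; injection h with h
          exact fin_ne_zero' m 3 (by omega) (by omega) (by push_cast; linear_combination -h))
      rw [hNxpair, hNypair, inter_pair_eq hpq, Set.ncard_singleton]
    · -- j = i - 1
      subst hj
      have hhx : f (Sum.inl ()) ∈ G.neighborSet x := by
        refine mem_of_union_singleton hunionx (by left; rfl) ?_
        exact fun hEq => hne _ _ (by simp) (hEq.trans hynei)
      have hpx : f (Sum.inr (i+1)) ∈ G.neighborSet x := by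
        refine mem_of_union_singleton hunionx (by right; left; rfl) ?_
        exact fun hEq => hne _ _ (by
          intro h; injection h with h
          exact fin_ne_zero' m 2 (by omega) (by omega) (by push_cast; linear_combination h)) (hEq.trans hynei)
      have hNxpair : G.neighborSet x = {f (Sum.inl ()), f (Sum.inr (i+1))} :=
        pair_eq_of_ncard (hne _ _ (by simp)) hhx hpx hx
      have hhy : f (Sum.inl ()) ∈ G.neighborSet y := by
        refine mem_of_union_singleton hunjy (by left; rfl) ?_
        exact fun hEq => hne _ _ (by simp) (hEq.trans hxnei)
      have hqy : f (Sum.inr (i-1-1)) ∈ G.neighborSet y := by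
        refine mem_of_union_singleton hunjy (by right; right; rfl) ?_
        exact fun hEq => hne _ _ (by
          intro h; injection h with h
          exact fin_ne_zero' m 2 (by omega) (by omega) (by push_cast; linear_combination -h)) (hEq.trans hxnei)
      have hNypair : G.neighborSet y = {f (Sum.inl ()), f (Sum.inr (i-1-1))} :=
        pair_eq_of_ncard (hne _ _ (by simp)) hhy hqy hy
      have hpq : f (Sum.inr (i+1)) ≠ f (Sum.inr (i-1-1)) := by
        exact hne _ _ (by
          intro h; injection h with h
          exact fin_ne_zero' m 3 (by omega) (by omega) (by push_cast; linear_combination h))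
      rw [hNxpair, hNypair, inter_pair_eq hpq, Set.ncard_singleton]
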